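/- arXiv:1702.03652 — 3 statements merged into one kernel-verified Lean document; each statement's English description precedes it below -/
import Mathlib

section
/- Let v be a positive smooth function on a domain Ω ⊂ ℝⁿ, n ≥ 3, satisfying v·Δv = (n/2)(|∇v|² − 1). Then the function w = Δv satisfies the differential inequality v·Δw + (2−n)·∇v·∇w = n|∇²v|² − (Δv)² ≥ 0, where |∇²v|² is the squared Frobenius norm of the Hessian of v. -/
open scoped BigOperators

noncomputable def pd {n : ℕ} (i : Fin n) (f : (Fin n → ℝ) → ℝ) (x : Fin n → ℝ) : ℝ :=
  fderiv ℝ f x (Pi.single i 1)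

noncomputable def pd2 {n : ℕ} (i j : Fin n) (f : (Fin n → ℝ) → ℝ) (x : Fin n → ℝ) : ℝ :=
  pd i (fun y => pd j f y) x

noncomputable def lap {n : ℕ} (f : (Fin n → ℝ) → ℝ) (x : Fin n → ℝ) : ℝ :=
  ∑ i, pd2 i i f x

noncomputable def gradSq {n : ℕ} (f : (Fin n → ℝ) → ℝ) (x : Fin n → ℝ) : ℝ :=
  ∑ i, (pd i f x) ^ 2

/-- Squared Frobenius norm of the Hessian, `|∇²v|²`. -/
noncomputable def hessSq {n : ℕ} (f : (Fin n → ℝ) → ℝ) (x : Fin n → ℝ) : ℝ :=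
  ∑ i, ∑ j, (pd2 i j f x) ^ 2

lemma coe_le_top' {k : ℕ∞} : ((k : WithTop ℕ∞)) ≤ ((⊤:ℕ∞) : WithTop ℕ∞) :=
  WithTop.coe_le_coe.2 le_top

lemma one_le_top' : (1 : WithTop ℕ∞) ≤ ((⊤:ℕ∞) : WithTop ℕ∞) := by
  exact_mod_cast (le_top : (1:ℕ∞) ≤ ⊤)

lemma ContDiffAt.dAt {n : ℕ} {f : (Fin n → ℝ) → ℝ} {x} (h : ContDiffAt ℝ (⊤:ℕ∞) f x) :
    DifferentiableAt ℝ f x := h.differentiableAt (by simp)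

lemma ContDiffAt.pd' {n : ℕ} {f : (Fin n → ℝ) → ℝ} {x} (hf : ContDiffAt ℝ (⊤:ℕ∞) f x) (i : Fin n) :
    ContDiffAt ℝ (⊤ : ℕ∞) (pd i f) x := by
  have h1 : ContDiffAt ℝ (⊤ : ℕ∞) (fderiv ℝ f) x := hf.fderiv_right (m := (⊤:ℕ∞)) (by simp)
  exact h1.clm_apply contDiffAt_const

lemma pd_congr {n : ℕ} {f g : (Fin n → ℝ) → ℝ} {x} (h : f =ᶠ[nhds x] g) (i : Fin n) :
    pd i f x = pd i g x := by
  unfold pd; rw [h.fderiv_eq]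

lemma pd_add {n : ℕ} {f g : (Fin n → ℝ) → ℝ} {x} (hf : DifferentiableAt ℝ f x)
    (hg : DifferentiableAt ℝ g x) (i : Fin n) :
    pd i (fun y => f y + g y) x = pd i f x + pd i g x := by
  unfold pd; rw [fderiv_fun_add hf hg]; simp

lemma pd_mul {n : ℕ} {f g : (Fin n → ℝ) → ℝ} {x} (hf : DifferentiableAt ℝ f x)
    (hg : DifferentiableAt ℝ g x) (i : Fin n) :
    pd i (fun y => f y * g y) x = pd i f x * g x + f x * pd i g x := by
  unfold pd; rw [fderiv_fun_mul hf hg]; simp; ring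

lemma pd_sum {n : ℕ} {ι : Type*} (s : Finset ι) {F : ι → (Fin n → ℝ) → ℝ} {x}
    (hF : ∀ j ∈ s, DifferentiableAt ℝ (F j) x) (i : Fin n) :
    pd i (fun y => ∑ j ∈ s, F j y) x = ∑ j ∈ s, pd i (F j) x := by
  unfold pd; rw [fderiv_fun_sum hF]; simp

lemma pd_const_mul {n : ℕ} {f : (Fin n → ℝ) → ℝ} {x} (hf : DifferentiableAt ℝ f x)
    (c : ℝ) (i : Fin n) :
    pd i (fun y => c * f y) x = c * pd i f x := by
  unfold pd; rw [fderiv_const_mul hf]; simp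

lemma pd_sub_const {n : ℕ} (f : (Fin n → ℝ) → ℝ) (x) (c : ℝ) (i : Fin n) :
    pd i (fun y => f y - c) x = pd i f x := by
  unfold pd; rw [fderiv_sub_const]

lemma pd_symm {n : ℕ} {f : (Fin n → ℝ) → ℝ} {x} (hf : ContDiffAt ℝ (⊤:ℕ∞) f x) (i j : Fin n) :
    pd i (pd j f) x = pd j (pd i f) x := by
  have hd : DifferentiableAt ℝ (fderiv ℝ f) x :=
    ((hf.fderiv_right (m := (⊤:ℕ∞)) (by simp)).differentiableAt (by simp))
  have key : ∀ a b : Fin n, pd a (pd b f) x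
      = fderiv ℝ (fderiv ℝ f) x (Pi.single a 1) (Pi.single b 1) := by
    intro a b
    show fderiv ℝ (fun y => fderiv ℝ f y (Pi.single b 1)) x (Pi.single a 1) = _
    rw [fderiv_clm_apply hd (differentiableAt_const _)]
    simp
  rw [key, key]
  exact (hf.isSymmSndFDerivAt
    (by rw [minSmoothness_of_isRCLikeNormedField, show ((2:WithTop ℕ∞)) = ((2:ℕ∞):WithTop ℕ∞) from rfl]; exact coe_le_top')).eq _ _

theorem stmt4 {n : ℕ} (hn : 3 ≤ n) (Ω : Set (Fin n → ℝ)) (hΩ : IsOpen Ω)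
    (v : (Fin n → ℝ) → ℝ) (hv : ContDiffOn ℝ (⊤ : ℕ∞) v Ω)
    (hvpos : ∀ x ∈ Ω, 0 < v x)
    (hpde : ∀ x ∈ Ω, v x * lap v x = ((n : ℝ) / 2) * (gradSq v x - 1)) :
    ∀ x ∈ Ω,
      v x * lap (fun y => lap v y) x
          + (2 - (n : ℝ)) * ∑ i, pd i v x * pd i (fun y => lap v y) x
        = (n : ℝ) * hessSq v x - (lap v x) ^ 2 ∧
      0 ≤ (n : ℝ) * hessSq v x - (lap v x) ^ 2 := by
  intro x hx
  have hsm : ∀ y ∈ Ω, ContDiffAt ℝ (⊤:ℕ∞) v y := fun y hy => hv.contDiffAt (hΩ.mem_nhds hy)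
  -- smoothness of lap v
  have hw : ∀ y ∈ Ω, ContDiffAt ℝ (⊤:ℕ∞) (fun z => lap v z) y := by
    intro y hy
    have : ContDiffAt ℝ (⊤:ℕ∞) (fun z => ∑ i, pd i (pd i v) z) y :=
      ContDiffAt.sum (fun i _ => (((hsm y hy).pd' i)).pd' i)
    exact this
  -- Step A : first derivative of the PDE, valid on Ω
  have hA : ∀ (i : Fin n), ∀ y ∈ Ω,
      pd i v y * lap v y + v y * pd i (fun z => lap v z) y
        = (n:ℝ) * ∑ j, pd j v y * pd i (pd j v) y := by
    intro i y hy
    have h1 : pd i (fun z => v z * lap v z) y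
        = pd i v y * lap v y + v y * pd i (fun z => lap v z) y :=
      pd_mul (hsm y hy).dAt (hw y hy).dAt i
    have h2 : pd i (fun z => v z * lap v z) y
        = pd i (fun z => ((n:ℝ)/2) * (gradSq v z - 1)) y := by
      apply pd_congr
      filter_upwards [hΩ.mem_nhds hy] with z hz using hpde z hz
    have h3 : pd i (fun z => ((n:ℝ)/2) * (gradSq v z - 1)) y
        = ((n:ℝ)/2) * pd i (fun z => gradSq v z - 1) y := by
      apply pd_const_mul
      exact (ContDiffAt.sub (ContDiffAt.sum (fun j _ =>
        (((hsm y hy).pd' j)).pow 2)) contDiffAt_const).dAt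
    have h4 : pd i (fun z => gradSq v z - 1) y = pd i (fun z => gradSq v z) y :=
      pd_sub_const _ _ _ _
    have h5 : pd i (fun z => gradSq v z) y = ∑ j, pd i (fun z => (pd j v z)^2) y := by
      apply pd_sum
      exact fun j _ => ((((hsm y hy).pd' j)).pow 2).dAt
    have h6 : ∀ j : Fin n, pd i (fun z => (pd j v z)^2) y
        = 2 * pd j v y * pd i (pd j v) y := by
      intro j
      have : pd i (fun z => pd j v z * pd j v z) y
          = pd i (pd j v) y * pd j v y + pd j v y * pd i (pd j v) y :=
        pd_mul ((hsm y hy).pd' j).dAt ((hsm y hy).pd' j).dAt i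
      calc pd i (fun z => (pd j v z)^2) y = pd i (fun z => pd j v z * pd j v z) y := by
            simp only [pow_two]
        _ = 2 * pd j v y * pd i (pd j v) y := by rw [this]; ring
    rw [← h1, h2, h3, h4, h5]
    rw [Finset.sum_congr rfl (fun j _ => h6 j)]
    rw [Finset.mul_sum, Finset.mul_sum]
    apply Finset.sum_congr rfl
    intro j _
    ring
  -- Step B : second derivative of the PDE at x
  have hB : ∀ i : Fin n,
      pd2 i i v x * lap v x + 2 * pd i v x * pd i (fun z => lap v z) x
          + v x * pd i (pd i (fun z => lap v z)) x
        = (n:ℝ) * ∑ j, ((pd i (pd j v) x)^2 + pd j v x * pd i (pd i (pd j v)) x) := by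
    intro i
    have e1 : pd i (fun y => pd i v y * lap v y + v y * pd i (fun z => lap v z) y) x
        = pd i (fun y => (n:ℝ) * ∑ j, pd j v y * pd i (pd j v) y) x := by
      apply pd_congr
      filter_upwards [hΩ.mem_nhds hx] with y hy using hA i y hy
    -- expand LHS of e1
    have dL1 : DifferentiableAt ℝ (fun y => pd i v y * lap v y) x :=
      (((hsm x hx).pd' i).mul (hw x hx)).dAt
    have dL2 : DifferentiableAt ℝ (fun y => v y * pd i (fun z => lap v z) y) x :=
      ((hsm x hx).mul ((hw x hx).pd' i)).dAt
    have eL : pd i (fun y => pd i v y * lap v y + v y * pd i (fun z => lap v z) y) x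
        = pd2 i i v x * lap v x + 2 * pd i v x * pd i (fun z => lap v z) x
          + v x * pd i (pd i (fun z => lap v z)) x := by
      rw [pd_add dL1 dL2 i,
        pd_mul ((hsm x hx).pd' i).dAt (hw x hx).dAt i,
        pd_mul (hsm x hx).dAt ((hw x hx).pd' i).dAt i]
      rw [show pd2 i i v x = pd i (pd i v) x from rfl]
      ring
    -- expand RHS of e1
    have eR : pd i (fun y => (n:ℝ) * ∑ j, pd j v y * pd i (pd j v) y) x
        = (n:ℝ) * ∑ j, ((pd i (pd j v) x)^2 + pd j v x * pd i (pd i (pd j v)) x) := by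
      rw [pd_const_mul (ContDiffAt.sum (fun j _ =>
        (((hsm x hx).pd' j).mul (((hsm x hx).pd' j).pd' i)))).dAt _ i]
      congr 1
      rw [pd_sum _ (fun j _ =>
        ((((hsm x hx).pd' j)).mul ((((hsm x hx).pd' j)).pd' i)).dAt) i]
      apply Finset.sum_congr rfl
      intro j _
      rw [pd_mul (((hsm x hx).pd' j)).dAt ((((hsm x hx).pd' j)).pd' i).dAt i]
      ring
    rw [← eL, e1, eR]
  -- Step C : commuting third derivatives
  have hC : ∀ j : Fin n, (∑ i, pd i (pd i (pd j v)) x) = pd j (fun z => lap v z) x := by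
    intro j
    have hterm : ∀ i : Fin n, pd i (pd i (pd j v)) x = pd j (pd i (pd i v)) x := by
      intro i
      have c1 : pd i (pd i (pd j v)) x = pd i (pd j (pd i v)) x := by
        apply pd_congr
        filter_upwards [hΩ.mem_nhds hx] with y hy using pd_symm (hsm y hy) i j
      have c2 : pd i (pd j (pd i v)) x = pd j (pd i (pd i v)) x :=
        pd_symm ((hsm x hx).pd' i) i j
      rw [c1, c2]
    have hlapsum : pd j (fun z => lap v z) x = ∑ i, pd j (pd i (pd i v)) x := by
      have : pd j (fun z => ∑ i, pd i (pd i v) z) x = ∑ i, pd j (pd i (pd i v)) x :=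
        pd_sum _ (fun i _ => ((((hsm x hx).pd' i)).pd' i).dAt) j
      exact this
    rw [hlapsum]
    exact Finset.sum_congr rfl (fun i _ => hterm i)
  -- Step D : sum Step B over i
  have hsumB := Finset.sum_congr rfl (fun i (_ : i ∈ Finset.univ) => hB i)
  have hL : (∑ i, (pd2 i i v x * lap v x + 2 * pd i v x * pd i (fun z => lap v z) x
          + v x * pd i (pd i (fun z => lap v z)) x))
      = (lap v x)^2 + 2 * (∑ i, pd i v x * pd i (fun y => lap v y) x)
          + v x * lap (fun y => lap v y) x := by
    rw [Finset.sum_add_distrib, Finset.sum_add_distrib]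
    congr 1
    · congr 1
      · rw [← Finset.sum_mul]
        rw [show (∑ i, pd2 i i v x) = lap v x from rfl]
        ring
      · rw [Finset.mul_sum]
        apply Finset.sum_congr rfl
        intro i _
        ring
    · rw [← Finset.mul_sum]
      rfl
  have hR : (∑ i, (n:ℝ) * ∑ j, ((pd i (pd j v) x)^2 + pd j v x * pd i (pd i (pd j v)) x))
      = (n:ℝ) * hessSq v x
        + (n:ℝ) * (∑ i, pd i v x * pd i (fun y => lap v y) x) := by
    rw [← Finset.mul_sum, ← mul_add]
    congr 1
    rw [show (∑ i, ∑ j, ((pd i (pd j v) x)^2 + pd j v x * pd i (pd i (pd j v)) x))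
        = (∑ i, ∑ j, (pd i (pd j v) x)^2)
          + ∑ i, ∑ j, pd j v x * pd i (pd i (pd j v)) x by
      rw [← Finset.sum_add_distrib]
      exact Finset.sum_congr rfl (fun i _ => Finset.sum_add_distrib)]
    congr 1
    rw [Finset.sum_comm]
    apply Finset.sum_congr rfl
    intro j _
    rw [← Finset.mul_sum, hC j]
  have hkey : (lap v x)^2 + 2 * (∑ i, pd i v x * pd i (fun y => lap v y) x)
          + v x * lap (fun y => lap v y) x
      = (n:ℝ) * hessSq v x
        + (n:ℝ) * (∑ i, pd i v x * pd i (fun y => lap v y) x) := by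
    rw [← hL, ← hR]; exact hsumB
  constructor
  · linarith [hkey]
  · -- Cauchy-Schwarz inequality
    have h1 : (lap v x)^2 ≤ (n:ℝ) * ∑ i, (pd2 i i v x)^2 := by
      have := sq_sum_le_card_mul_sum_sq (s := (Finset.univ : Finset (Fin n)))
        (f := fun i => pd2 i i v x)
      simpa [lap] using this
    have h2 : (∑ i, (pd2 i i v x)^2) ≤ hessSq v x := by
      apply Finset.sum_le_sum
      intro i _
      exact Finset.single_le_sum (f := fun j => (pd2 i j v x)^2)
        (fun j _ => sq_nonneg _) (Finset.mem_univ i)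
    have h3 : (n:ℝ) * (∑ i, (pd2 i i v x)^2) ≤ (n:ℝ) * hessSq v x :=
      mul_le_mul_of_nonneg_left h2 (by positivity)
    linarith
end

section
/- Fix n ≥ 6, a constant A > 0, and define G(r) = r^{2−n} + A for r > 0 (the flat-case Green's function model with positive mass). Let F(r) = G(r)^{−2/(n−2)}. Then F(r)·F''(r) − (1/2)·F'(r)² = −2(n−1)A·rⁿ + O(r^{n+1}) as r → 0⁺; in particular there exist r₀ > 0 and C > 0 such that F(r)F''(r) − (1/2)F'(r)² ≤ −C·rⁿ for all 0 < r < r₀. -/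
open Asymptotics Topology

/-- The flat-case Green's function model with positive mass:
`F(r) = G(r)^{−2/(n−2)}` with `G(r) = r^{2−n} + A`. -/
noncomputable def Fmodel (n : ℕ) (A : ℝ) : ℝ → ℝ := fun r =>
  (r ^ ((2 : ℝ) - (n : ℝ)) + A) ^ (-(2 : ℝ) / ((n : ℝ) - 2))

noncomputable def ppm (n : ℕ) : ℝ := 2 - (n : ℝ)
noncomputable def alm (n : ℕ) : ℝ := -(2 : ℝ) / ((n : ℝ) - 2)

noncomputable def F1m (n : ℕ) (A : ℝ) : ℝ → ℝ := fun r =>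
  alm n * ppm n * r ^ (ppm n - 1) * (r ^ ppm n + A) ^ (alm n - 1)

noncomputable def F2m (n : ℕ) (A : ℝ) : ℝ → ℝ := fun r =>
  alm n * (alm n - 1) * ppm n ^ 2 * r ^ (2 * ppm n - 2) * (r ^ ppm n + A) ^ (alm n - 2)
    + alm n * ppm n * (ppm n - 1) * r ^ (ppm n - 2) * (r ^ ppm n + A) ^ (alm n - 1)

lemma Gpos (n : ℕ) {A : ℝ} (hA : 0 < A) {r : ℝ} (hr : 0 < r) :
    0 < r ^ ppm n + A :=
  add_pos (Real.rpow_pos_of_pos hr _) hA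

lemma hasDerivAt_Fmodel (n : ℕ) {A : ℝ} (hA : 0 < A) {r : ℝ} (hr : 0 < r) :
    HasDerivAt (Fmodel n A) (F1m n A r) r := by
  have h1 : HasDerivAt (fun x : ℝ => x ^ ppm n + A) (ppm n * r ^ (ppm n - 1)) r :=
    (Real.hasDerivAt_rpow_const (Or.inl hr.ne')).add_const A
  have h2 := h1.rpow_const (p := alm n) (Or.inl (Gpos n hA hr).ne')
  have : Fmodel n A = fun x : ℝ => (x ^ ppm n + A) ^ alm n := rfl
  rw [this]
  convert h2 using 1
  simp only [F1m]; ring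

lemma hasDerivAt_F1m (n : ℕ) {A : ℝ} (hA : 0 < A) {r : ℝ} (hr : 0 < r) :
    HasDerivAt (F1m n A) (F2m n A r) r := by
  have h1 : HasDerivAt (fun x : ℝ => x ^ ppm n + A) (ppm n * r ^ (ppm n - 1)) r :=
    (Real.hasDerivAt_rpow_const (Or.inl hr.ne')).add_const A
  have hG := h1.rpow_const (p := alm n - 1) (Or.inl (Gpos n hA hr).ne')
  have hr1 : HasDerivAt (fun x : ℝ => x ^ (ppm n - 1)) ((ppm n - 1) * r ^ (ppm n - 1 - 1)) r :=
    Real.hasDerivAt_rpow_const (Or.inl hr.ne')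
  have h := ((hr1.const_mul (alm n * ppm n)).fun_mul hG)
  have hF1eq : F1m n A = fun x : ℝ =>
      (alm n * ppm n * x ^ (ppm n - 1)) * (x ^ ppm n + A) ^ (alm n - 1) := rfl
  rw [hF1eq]
  refine h.congr_deriv ?_
  have e1 : r ^ (ppm n - 1) * r ^ (ppm n - 1) = r ^ (2 * ppm n - 2) := by
    rw [← Real.rpow_add hr]; congr 1; ring
  have e2 : r ^ (ppm n - 1 - 1) = r ^ (ppm n - 2) := by congr 1; ring
  simp only [F2m]
  rw [e2, ← e1]
  ring

lemma algebraic_id (al p e s r A g F Fpp Fp : ℝ) (hp : p ≠ 0) (hal : al = 2 / p)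
    (hg : g = s * r * r + A)
    (hF : F = e * g * g)
    (hFpp : Fpp = al * (al - 1) * p ^ 2 * (s * s * (r * r)) * e + al * p * (p - 1) * s * (e * g))
    (hFp : Fp = al * p * (s * r) * (e * g)) :
    F * Fpp - (1 / 2) * Fp ^ 2 = 2 * A * (p - 1) * (e * e * (g * g) * s) := by
  subst hal hg hF hFpp hFp
  field_simp
  ring

lemma valQ (n : ℕ) (hn : 6 ≤ n) {A : ℝ} (hA : 0 < A) {r : ℝ} (hr : 0 < r) :
    Fmodel n A r * F2m n A r - (1 / 2) * (F1m n A r) ^ 2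
      = -(2 * ((n : ℝ) - 1) * A * r ^ n)
          * (1 + A * r ^ ((n : ℝ) - 2)) ^ (2 * alm n - 2) := by
  have hn6 : (6 : ℝ) ≤ (n : ℝ) := by exact_mod_cast hn
  have hn2 : ((n : ℝ) - 2) ≠ 0 := by linarith
  have hp : ppm n ≠ 0 := by simp only [ppm]; intro h; apply hn2; linarith
  have hp' : (2 : ℝ) - (n : ℝ) ≠ 0 := hp
  have hal : alm n = 2 / ppm n := by
    simp only [alm, ppm]
    rw [div_eq_div_iff hn2 hp']; ring
  have hg : 0 < r ^ ppm n + A := Gpos n hA hr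
  set g : ℝ := r ^ ppm n + A with hgdef
  set e : ℝ := g ^ (alm n - 2) with hedef
  set s : ℝ := r ^ (ppm n - 2) with hsdef
  have kg0 : g ^ alm n = e * g * g := by
    rw [hedef, ← Real.rpow_add_one hg.ne', ← Real.rpow_add_one hg.ne']
    congr 1; ring
  have kg1 : g ^ (alm n - 1) = e * g := by
    rw [hedef, ← Real.rpow_add_one hg.ne']
    congr 1; ring
  have kg2 : g ^ (2 * alm n - 2) = e * e * (g * g) := by
    have t : e * e * (g * g) = g ^ (alm n - 2) * g ^ (alm n - 2) * g * g := by
      rw [hedef]; ring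
    rw [t, ← Real.rpow_add hg, ← Real.rpow_add_one hg.ne', ← Real.rpow_add_one hg.ne']
    congr 1; ring
  have kr1 : r ^ (ppm n - 1) = s * r := by
    rw [hsdef, ← Real.rpow_add_one hr.ne']
    congr 1; ring
  have kr0 : r ^ ppm n = s * r * r := by
    rw [hsdef, ← Real.rpow_add_one hr.ne', ← Real.rpow_add_one hr.ne']
    congr 1; ring
  have kr2 : r ^ (2 * ppm n - 2) = s * s * (r * r) := by
    have t : s * s * (r * r) = r ^ (ppm n - 2) * r ^ (ppm n - 2) * r * r := by
      rw [hsdef]; ring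
    rw [t, ← Real.rpow_add hr, ← Real.rpow_add_one hr.ne', ← Real.rpow_add_one hr.ne']
    congr 1; ring
  have hgr : g = s * r * r + A := by rw [hgdef, kr0]
  -- step B: relate g ^ (2α-2) * s to the RHS factor
  have hsplit : g = r ^ ppm n * (1 + A * r ^ ((n : ℝ) - 2)) := by
    rw [hgdef, mul_add, mul_one]
    congr 1
    rw [mul_comm A, ← mul_assoc, ← Real.rpow_add hr,
      show ppm n + ((n : ℝ) - 2) = 0 by simp only [ppm]; ring, Real.rpow_zero, one_mul]
  have honepos : (0 : ℝ) < 1 + A * r ^ ((n : ℝ) - 2) :=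
    add_pos one_pos (mul_pos hA (Real.rpow_pos_of_pos hr _))
  have hRB : g ^ (2 * alm n - 2) * s
      = r ^ (n : ℕ) * (1 + A * r ^ ((n : ℝ) - 2)) ^ (2 * alm n - 2) := by
    rw [hsplit, Real.mul_rpow (Real.rpow_pos_of_pos hr _).le honepos.le,
      ← Real.rpow_natCast r n]
    rw [hsdef, ← Real.rpow_mul hr.le]
    rw [show (r ^ (ppm n * (2 * alm n - 2)) * (1 + A * r ^ ((n:ℝ) - 2)) ^ (2 * alm n - 2))
        * r ^ (ppm n - 2)
        = (r ^ (ppm n * (2 * alm n - 2)) * r ^ (ppm n - 2))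
          * (1 + A * r ^ ((n:ℝ) - 2)) ^ (2 * alm n - 2) by ring,
      ← Real.rpow_add hr]
    congr 2
    simp only [ppm, alm]
    field_simp
    ring
  -- step A: the core algebraic identity
  have hFval : Fmodel n A r = e * g * g := by
    rw [show Fmodel n A r = g ^ alm n from rfl, kg0]
  have hFppval : F2m n A r
      = alm n * (alm n - 1) * ppm n ^ 2 * (s * s * (r * r)) * e
        + alm n * ppm n * (ppm n - 1) * s * (e * g) := by
    show alm n * (alm n - 1) * ppm n ^ 2 * r ^ (2 * ppm n - 2) * g ^ (alm n - 2)
        + alm n * ppm n * (ppm n - 1) * r ^ (ppm n - 2) * g ^ (alm n - 1) = _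
    rw [kr2, kg1]
  have hFpval : F1m n A r = alm n * ppm n * (s * r) * (e * g) := by
    show alm n * ppm n * r ^ (ppm n - 1) * g ^ (alm n - 1) = _
    rw [kr1, kg1]
  have stepA := algebraic_id (alm n) (ppm n) e s r A g (Fmodel n A r) (F2m n A r) (F1m n A r)
    hp hal hgr hFval hFppval hFpval
  rw [stepA, show e * e * (g * g) * s = g ^ (2 * alm n - 2) * s by rw [kg2],
    hRB, show ((n : ℝ) - 1) = -(ppm n - 1) by simp only [ppm]; ring]
  all_goals ring_nf

lemma derivQ (n : ℕ) {A : ℝ} (hA : 0 < A) {r : ℝ} (hr : 0 < r) :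
    deriv (Fmodel n A) r = F1m n A r ∧ deriv (deriv (Fmodel n A)) r = F2m n A r := by
  constructor
  · exact (hasDerivAt_Fmodel n hA hr).deriv
  · have hev : deriv (Fmodel n A) =ᶠ[𝓝 r] F1m n A := by
      filter_upwards [Ioi_mem_nhds hr] with x hx
      exact (hasDerivAt_Fmodel n hA hx).deriv
    rw [hev.deriv_eq]
    exact (hasDerivAt_F1m n hA hr).deriv

theorem stmt12 (n : ℕ) (hn : 6 ≤ n) (A : ℝ) (hA : 0 < A) :
    ((fun r : ℝ => Fmodel n A r * deriv (deriv (Fmodel n A)) r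
          - (1 / 2) * (deriv (Fmodel n A) r) ^ 2 - (-(2 * ((n : ℝ) - 1) * A * r ^ n)))
        =O[𝓝[>] (0 : ℝ)] fun r : ℝ => r ^ (n + 1)) ∧
    ∃ r₀ : ℝ, 0 < r₀ ∧ ∃ C : ℝ, 0 < C ∧ ∀ r : ℝ, 0 < r → r < r₀ →
      Fmodel n A r * deriv (deriv (Fmodel n A)) r - (1 / 2) * (deriv (Fmodel n A) r) ^ 2
        ≤ -C * r ^ n := by
  have hn6 : (6 : ℝ) ≤ (n : ℝ) := by exact_mod_cast hn
  have hc : (0 : ℝ) < 2 * ((n : ℝ) - 1) * A := by nlinarith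
  set c : ℝ := 2 * ((n : ℝ) - 1) * A with hcdef
  set β : ℝ := 2 * alm n - 2 with hβdef
  set h : ℝ → ℝ := fun r => (1 + A * r ^ ((n : ℝ) - 2)) ^ β with hhdef
  have hQ : ∀ r : ℝ, 0 < r →
      Fmodel n A r * deriv (deriv (Fmodel n A)) r - (1 / 2) * (deriv (Fmodel n A) r) ^ 2
        = -(c * r ^ n) * h r := by
    intro r hr
    obtain ⟨h1, h2⟩ := derivQ n hA hr
    rw [h1, h2, valQ n hn hA hr]
  constructor
  · -- asymptotics
    have hBig : (fun x : ℝ => (1 + x) ^ β - 1) =O[𝓝 0] (fun x : ℝ => x) := by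
      have h1 : HasDerivAt (fun x : ℝ => 1 + x) 1 0 := by
        simpa using (hasDerivAt_id (0 : ℝ)).const_add 1
      have h2 := h1.rpow_const (p := β) (by norm_num)
      have := (h2.hasDerivAtFilter le_rfl).isBigO_sub
      simpa [Function.comp_def] using this
    have htend : Filter.Tendsto (fun r : ℝ => A * r ^ ((n : ℝ) - 2)) (𝓝[>] 0) (𝓝 0) := by
      have : Filter.Tendsto (fun r : ℝ => r ^ ((n : ℝ) - 2)) (𝓝 0) (𝓝 0) := by
        have hcont := (Real.continuousAt_rpow_const 0 ((n : ℝ) - 2)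
          (Or.inr (by linarith)))
        have h0 : (0 : ℝ) ^ ((n : ℝ) - 2) = 0 := Real.zero_rpow (by intro hh; linarith)
        simpa [ContinuousAt, h0] using hcont
      simpa using ((this.const_mul A).mono_left nhdsWithin_le_nhds)
    have hcomp : (fun r : ℝ => h r - 1) =O[𝓝[>] 0] (fun r : ℝ => A * r ^ ((n : ℝ) - 2)) := by
      have := hBig.comp_tendsto htend
      simpa [Function.comp_def, hhdef] using this
    have hu : (fun r : ℝ => A * r ^ ((n : ℝ) - 2)) =O[𝓝[>] 0] (fun r : ℝ => r) := by
      rw [Asymptotics.isBigO_iff]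
      refine ⟨|A|, ?_⟩
      filter_upwards [Ioo_mem_nhdsGT_of_mem (by constructor <;> norm_num :
        (0:ℝ) ∈ Set.Ico (0:ℝ) 1)] with x hx
      have hx0 : 0 < x := hx.1
      have hx1 : x ≤ 1 := hx.2.le
      have hle : x ^ ((n : ℝ) - 2) ≤ x := by
        have := Real.rpow_le_rpow_of_exponent_ge hx0 hx1
          (show (1:ℝ) ≤ (n:ℝ) - 2 by linarith)
        simpa using this
      have hpos : 0 < x ^ ((n : ℝ) - 2) := Real.rpow_pos_of_pos hx0 _
      rw [Real.norm_eq_abs, Real.norm_eq_abs, abs_mul, abs_of_pos hpos]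
      calc |A| * x ^ ((n : ℝ) - 2) ≤ |A| * x := mul_le_mul_of_nonneg_left hle (abs_nonneg A)
        _ = |A| * |x| := by rw [abs_of_pos hx0]
    have hO1 : (fun r : ℝ => h r - 1) =O[𝓝[>] 0] (fun r : ℝ => r) := hcomp.trans hu
    have hfinal : (fun r : ℝ => -(c * r ^ n) * (h r - 1))
        =O[𝓝[>] 0] (fun r : ℝ => r ^ (n + 1)) := by
      have := ((isBigO_refl (fun r : ℝ => r ^ n) (𝓝[>] 0)).mul hO1).const_mul_left (-c)
      refine this.congr (fun x => by ring) (fun x => by rw [pow_succ])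
    refine hfinal.congr' ?_ (by rfl)
    filter_upwards [self_mem_nhdsWithin] with r hr
    have hr' : 0 < r := hr
    rw [hQ r hr']
    ring
  · -- pointwise negativity
    have hβneg : β ≤ 0 := by
      have hn2 : (0 : ℝ) < (n : ℝ) - 2 := by linarith
      have : alm n < 0 := div_neg_of_neg_of_pos (by norm_num) hn2
      rw [hβdef]; linarith
    have h2pos : (0 : ℝ) < (2 : ℝ) ^ β := Real.rpow_pos_of_pos two_pos _
    refine ⟨min 1 (1 / (A + 1)), lt_min one_pos (by positivity), c * (2 : ℝ) ^ β,
      mul_pos hc h2pos, fun r hr hr0 => ?_⟩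
    have hr1 : r < 1 := lt_of_lt_of_le hr0 (min_le_left _ _)
    have hrA : r < 1 / (A + 1) := lt_of_lt_of_le hr0 (min_le_right _ _)
    have hxle : A * r ^ ((n : ℝ) - 2) ≤ 1 := by
      have hle : r ^ ((n : ℝ) - 2) ≤ r := by
        have := Real.rpow_le_rpow_of_exponent_ge hr hr1.le
          (show (1:ℝ) ≤ (n:ℝ) - 2 by linarith)
        simpa using this
      have : A * r ^ ((n : ℝ) - 2) ≤ A * r :=
        mul_le_mul_of_nonneg_left hle hA.le
      have h2 : A * r ≤ A * (1 / (A + 1)) := mul_le_mul_of_nonneg_left hrA.le hA.le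
      have h3 : A * (1 / (A + 1)) ≤ 1 := by
        rw [mul_one_div, div_le_one (by linarith)]; linarith
      linarith
    have hhge : (2 : ℝ) ^ β ≤ h r := by
      have h1le : 1 + A * r ^ ((n : ℝ) - 2) ≤ 2 := by linarith
      have h1pos : (0 : ℝ) < 1 + A * r ^ ((n : ℝ) - 2) :=
        add_pos one_pos (mul_pos hA (Real.rpow_pos_of_pos hr _))
      exact Real.rpow_le_rpow_of_nonpos h1pos h1le hβneg
    rw [hQ r hr]
    have hrn : (0 : ℝ) < r ^ n := pow_pos hr n
    have := mul_le_mul_of_nonneg_left hhge (mul_pos hc hrn).le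
    nlinarith
end

section
/- Let f : [a,b] → ℝ be C² with f(a) = f(b) = 0 and f(m) > 0 for some m ∈ (a,b). Then there exists t* ∈ (a,b) with f''(t*) = 0, f'(t*) ≥ f(m)/(m−a) > 0, and 0 ≤ f(t*) ≤ (b−a)·f'(t*). -/
theorem stmt14 (a b m : ℝ) (f : ℝ → ℝ) (hab : a < b) (ham : a < m) (hmb : m < b)
    (hf : ContDiffOn ℝ 2 f (Set.Icc a b))
    (hfa : f a = 0) (hfb : f b = 0) (hfm : 0 < f m)
    (hnn : ∀ x ∈ Set.Icc a b, 0 ≤ f x)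
    (hda : |derivWithin f (Set.Icc a b) a| ≤ f m / (2 * (m - a)))
    (hdb : |derivWithin f (Set.Icc a b) b| ≤ f m / (2 * (m - a))) :
    ∃ t ∈ Set.Ioo a b, deriv (deriv f) t = 0 ∧
      f m / (m - a) ≤ deriv f t ∧ 0 < f m / (m - a) ∧
      0 ≤ f t ∧ f t ≤ (b - a) * deriv f t := by
  have hma : (0:ℝ) < m - a := by linarith
  set s := Set.Icc a b with hs
  have hud : UniqueDiffOn ℝ s := uniqueDiffOn_Icc hab
  set φ := derivWithin f s with hφ
  have hφc : ContinuousOn φ s := hf.continuousOn_derivWithin hud one_le_two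
  have hfc : ContinuousOn f s := hf.continuousOn
  have hder : ∀ x ∈ Set.Ioo a b, HasDerivAt f (φ x) x := by
    intro x hx
    have hmem : s ∈ nhds x := Icc_mem_nhds hx.1 hx.2
    have hd := (hf.differentiableOn two_ne_zero x
      (Set.Ioo_subset_Icc_self hx)).differentiableAt hmem
    have h2 : φ x = deriv f x := derivWithin_of_mem_nhds hmem
    rw [h2]; exact hd.hasDerivAt
  have hpos : 0 < f m / (m - a) := div_pos hfm hma
  have hhalf : f m / (2 * (m - a)) < f m / (m - a) := by
    rw [div_lt_div_iff₀ (by positivity) hma]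
    nlinarith
  -- MVT on [a, m]
  obtain ⟨ξ, hξ, hξeq⟩ := exists_hasDerivAt_eq_slope f φ ham
    (hfc.mono (Set.Icc_subset_Icc le_rfl hmb.le))
    (fun x hx => hder x ⟨hx.1, hx.2.trans hmb⟩)
  rw [hfa] at hξeq
  have hξval : φ ξ = f m / (m - a) := by rw [hξeq]; ring_nf
  -- max of φ on Icc
  obtain ⟨t, hts, htmax⟩ := isCompact_Icc.exists_isMaxOn (Set.nonempty_Icc.2 hab.le) hφc
  have hξs : ξ ∈ s := ⟨hξ.1.le, by linarith [hξ.2]⟩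
  have hφt : f m / (m - a) ≤ φ t := by rw [← hξval]; exact htmax hξs
  have hta : t ≠ a := by
    intro h; rw [h] at hφt
    have : φ a ≤ f m / (2 * (m - a)) := (le_abs_self _).trans hda
    linarith
  have htb : t ≠ b := by
    intro h; rw [h] at hφt
    have : φ b ≤ f m / (2 * (m - a)) := (le_abs_self _).trans hdb
    linarith
  have htIoo : t ∈ Set.Ioo a b := ⟨lt_of_le_of_ne hts.1 (Ne.symm hta),
    lt_of_le_of_ne hts.2 htb⟩
  have hderiv_eq : ∀ x ∈ Set.Ioo a b, deriv f x = φ x := fun x hx =>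
    (derivWithin_of_mem_nhds (Icc_mem_nhds hx.1 hx.2)).symm
  have hdft : deriv f t = φ t := hderiv_eq t htIoo
  -- local max of deriv f at t
  have hlm : IsLocalMax (deriv f) t := by
    filter_upwards [Ioo_mem_nhds htIoo.1 htIoo.2] with x hx
    rw [hderiv_eq x hx, hdft]
    exact htmax (Set.Ioo_subset_Icc_self hx)
  have hsecond : deriv (deriv f) t = 0 := hlm.deriv_eq_zero
  -- f t ≤ (b - a) * φ t via MVT on [a, t]
  obtain ⟨c, hc, hceq⟩ := exists_hasDerivAt_eq_slope f φ htIoo.1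
    (hfc.mono (Set.Icc_subset_Icc le_rfl htIoo.2.le))
    (fun x hx => hder x ⟨hx.1, hx.2.trans htIoo.2⟩)
  rw [hfa] at hceq
  have hcs : c ∈ s := ⟨hc.1.le, by linarith [hc.2, htIoo.2]⟩
  have hcle : φ c ≤ φ t := htmax hcs
  have hta' : (0:ℝ) < t - a := by linarith [htIoo.1]
  have hft_le : f t ≤ (t - a) * φ t := by
    have : (f t - 0) / (t - a) ≤ φ t := by rw [← hceq]; exact hcle
    rw [div_le_iff₀ hta'] at this; linarith
  have hφtpos : 0 < φ t := lt_of_lt_of_le hpos hφt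
  refine ⟨t, htIoo, hsecond, ?_, hpos, hnn t hts, ?_⟩
  · rw [hdft]; exact hφt
  · rw [hdft]
    have : (t - a) * φ t ≤ (b - a) * φ t := by nlinarith [htIoo.2]
    linarith
end
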